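/- Let γ > 2, d ≥ 1, and K(t,t) as above. Then ∫_{ℝ^d} tr(K(t,t)) · exp(−γ‖t‖²) dt = (π/(γ−2))^{d/2} · ( d + d/(2(γ−2)) ) − ( d(d+1)/(2(γ−1)) + d ) · (π/(γ−1))^{d/2}. -/

import Mathlib

open MeasureTheory Real Filter
open scoped RealInnerProductSpace

-- 1D lemmas
lemma aux_integrable_sq_exp {b : ℝ} (hb : 0 < b) :
    Integrable fun x : ℝ => x ^ 2 * Real.exp (-b * x ^ 2) := by
  have := integrable_rpow_mul_exp_neg_mul_sq hb (by norm_num : (-1 : ℝ) < 2)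
  simpa [Real.rpow_two] using this

lemma aux_integral_sq_exp {b : ℝ} (hb : 0 < b) :
    ∫ x : ℝ, x ^ 2 * Real.exp (-b * x ^ 2) = Real.sqrt (π / b) / (2 * b) := by
  have hderiv : ∀ x : ℝ, HasDerivAt (fun x : ℝ => x * Real.exp (-b * x ^ 2))
      (Real.exp (-b * x ^ 2) - 2 * b * (x ^ 2 * Real.exp (-b * x ^ 2))) x := by
    intro x
    have h := (hasDerivAt_id x).mul (((hasDerivAt_pow 2 x).const_mul (-b)).exp)
    refine h.congr_deriv ?_
    simp
    ring
  have hint : Integrable fun x : ℝ =>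
      Real.exp (-b * x ^ 2) - 2 * b * (x ^ 2 * Real.exp (-b * x ^ 2)) :=
    (integrable_exp_neg_mul_sq hb).sub ((aux_integrable_sq_exp hb).const_mul _)
  have h0 := integral_eq_zero_of_hasDerivAt_of_integrable hderiv hint
    (integrable_mul_exp_neg_mul_sq hb)
  rw [integral_sub (integrable_exp_neg_mul_sq hb) ((aux_integrable_sq_exp hb).const_mul _),
    MeasureTheory.integral_const_mul, integral_gaussian, sub_eq_zero] at h0
  field_simp at h0 ⊢
  linarith

lemma aux_norm_symm_sq {d : ℕ} (x : Fin d → ℝ) :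
    ‖(MeasurableEquiv.toLp 2 (Fin d → ℝ)).symm.symm x‖ ^ 2 = ∑ i, x i ^ 2 := by
  simp only [MeasurableEquiv.symm_symm, MeasurableEquiv.coe_toLp,
    EuclideanSpace.norm_eq, Real.norm_eq_abs, sq_abs]
  rw [Real.sq_sqrt]
  exact Finset.sum_nonneg fun i _ => sq_nonneg _

lemma aux_integrable_exp_E {d : ℕ} {b : ℝ} (hb : 0 < b) :
    Integrable fun t : EuclideanSpace ℝ (Fin d) => Real.exp (-b * ‖t‖ ^ 2) := by
  have := (EuclideanSpace.volume_preserving_symm_measurableEquiv_toLp (Fin d)).symm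
  rw [← this.integrable_comp_emb (MeasurableEquiv.measurableEmbedding _)]
  have : (fun x : Fin d → ℝ => Real.exp (-b * ‖(MeasurableEquiv.toLp 2 (Fin d → ℝ)).symm.symm x‖ ^ 2))
      = fun x : Fin d → ℝ => ∏ i, Real.exp (-b * x i ^ 2) := by
    ext x
    rw [aux_norm_symm_sq, ← Real.exp_sum]
    congr 1
    rw [Finset.mul_sum]
  rw [Function.comp_def, this]
  exact Integrable.fintype_prod (f := fun _ : Fin d => fun y : ℝ => Real.exp (-b * y ^ 2))
      fun _ => integrable_exp_neg_mul_sq hb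

lemma aux_prod_eq {d : ℕ} {b : ℝ} (i : Fin d) (x : Fin d → ℝ) :
    x i ^ 2 * ∏ j, Real.exp (-b * x j ^ 2)
      = ∏ j, (if j = i then x j ^ 2 * Real.exp (-b * x j ^ 2) else Real.exp (-b * x j ^ 2)) := by
  rw [← Finset.mul_prod_erase Finset.univ _ (Finset.mem_univ i),
    ← Finset.mul_prod_erase Finset.univ
      (fun j => (if j = i then x j ^ 2 * Real.exp (-b * x j ^ 2) else Real.exp (-b * x j ^ 2)))
      (Finset.mem_univ i)]
  simp only [if_pos rfl]
  rw [← mul_assoc]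
  congr 1
  exact (Finset.prod_congr rfl fun j hj => by
      rw [if_neg (Finset.mem_erase.mp hj).1]).symm

lemma aux_integrable_normsq_exp_E {d : ℕ} {b : ℝ} (hb : 0 < b) :
    Integrable fun t : EuclideanSpace ℝ (Fin d) => ‖t‖ ^ 2 * Real.exp (-b * ‖t‖ ^ 2) := by
  have hmp := (EuclideanSpace.volume_preserving_symm_measurableEquiv_toLp (Fin d)).symm
  rw [← hmp.integrable_comp_emb (MeasurableEquiv.measurableEmbedding _)]
  have heq : (fun x : Fin d → ℝ =>
      ‖(MeasurableEquiv.toLp 2 (Fin d → ℝ)).symm.symm x‖ ^ 2 *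
        Real.exp (-b * ‖(MeasurableEquiv.toLp 2 (Fin d → ℝ)).symm.symm x‖ ^ 2))
      = fun x : Fin d → ℝ => ∑ i, ∏ j,
          (if j = i then x j ^ 2 * Real.exp (-b * x j ^ 2) else Real.exp (-b * x j ^ 2)) := by
    ext x
    rw [aux_norm_symm_sq]
    have : Real.exp (-b * ∑ i, x i ^ 2) = ∏ i, Real.exp (-b * x i ^ 2) := by
      rw [← Real.exp_sum]; congr 1; rw [Finset.mul_sum]
    rw [this, Finset.sum_mul]
    exact Finset.sum_congr rfl fun i _ => aux_prod_eq i x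
  rw [Function.comp_def, heq]
  refine integrable_finset_sum _ fun i _ => ?_
  exact Integrable.fintype_prod
    (f := fun j => fun y : ℝ =>
      if j = i then y ^ 2 * Real.exp (-b * y ^ 2) else Real.exp (-b * y ^ 2))
    fun j => by
      by_cases h : j = i
      · simpa [h] using aux_integrable_sq_exp hb
      · simpa [h] using integrable_exp_neg_mul_sq hb

lemma aux_integral_normsq_exp_E {d : ℕ} {b : ℝ} (hb : 0 < b) :
    ∫ t : EuclideanSpace ℝ (Fin d), ‖t‖ ^ 2 * Real.exp (-b * ‖t‖ ^ 2)
      = (d / (2 * b)) * (π / b) ^ ((d : ℝ) / 2) := by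
  have hmp := (EuclideanSpace.volume_preserving_symm_measurableEquiv_toLp (Fin d)).symm
  rw [← hmp.integral_comp']
  have heq : ∀ x : Fin d → ℝ,
      ‖(MeasurableEquiv.toLp 2 (Fin d → ℝ)).symm.symm x‖ ^ 2 *
        Real.exp (-b * ‖(MeasurableEquiv.toLp 2 (Fin d → ℝ)).symm.symm x‖ ^ 2)
      = ∑ i, ∏ j,
          (if j = i then x j ^ 2 * Real.exp (-b * x j ^ 2) else Real.exp (-b * x j ^ 2)) := by
    intro x
    rw [aux_norm_symm_sq]
    have : Real.exp (-b * ∑ i, x i ^ 2) = ∏ i, Real.exp (-b * x i ^ 2) := by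
      rw [← Real.exp_sum]; congr 1; rw [Finset.mul_sum]
    rw [this, Finset.sum_mul]
    exact Finset.sum_congr rfl fun i _ => aux_prod_eq i x
  simp only [heq]
  rw [integral_finset_sum (μ := volume) _ (fun i _ => Integrable.fintype_prod
    (f := fun j => fun y : ℝ =>
      if j = i then y ^ 2 * Real.exp (-b * y ^ 2) else Real.exp (-b * y ^ 2))
    fun j => by
      by_cases h : j = i
      · simpa [h] using aux_integrable_sq_exp hb
      · simpa [h] using integrable_exp_neg_mul_sq hb)]
  have hterm : ∀ i : Fin d,
      (∫ x : Fin d → ℝ, ∏ j,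
        (if j = i then x j ^ 2 * Real.exp (-b * x j ^ 2) else Real.exp (-b * x j ^ 2)))
      = (Real.sqrt (π / b) / (2 * b)) * Real.sqrt (π / b) ^ (d - 1) := by
    intro i
    rw [MeasureTheory.integral_fintype_prod_volume_eq_prod (ι := Fin d)
      (f := fun j => fun y : ℝ =>
        if j = i then y ^ 2 * Real.exp (-b * y ^ 2) else Real.exp (-b * y ^ 2))]
    rw [← Finset.mul_prod_erase Finset.univ _ (Finset.mem_univ i)]
    simp only [eq_self_iff_true, if_true, if_pos]
    rw [aux_integral_sq_exp hb]
    congr 1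
    have hconst : ∀ j ∈ Finset.univ.erase i,
        (∫ x : ℝ, if j = i then x ^ 2 * Real.exp (-b * x ^ 2) else Real.exp (-b * x ^ 2))
          = Real.sqrt (π / b) := fun j hj => by
      simp only [if_neg (Finset.mem_erase.mp hj).1]
      exact integral_gaussian b
    rw [Finset.prod_congr rfl hconst, Finset.prod_const,
      Finset.card_erase_of_mem (Finset.mem_univ i), Finset.card_univ, Fintype.card_fin]
  simp only [hterm, Finset.sum_const, Finset.card_univ, Fintype.card_fin, nsmul_eq_mul]
  have hpb : 0 < π / b := div_pos Real.pi_pos hb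
  have hsq : Real.sqrt (π / b) = (π / b) ^ ((1 : ℝ) / 2) := Real.sqrt_eq_rpow _
  rw [hsq]
  rcases d with _ | k
  · simp
  · have hkk : (k + 1) - 1 = k := rfl
    rw [hkk]
    have key : (π / b) ^ ((1:ℝ)/2) * ((π / b) ^ ((1:ℝ)/2)) ^ k
        = (π / b) ^ ((((k:ℕ)+1 : ℕ) : ℝ)/2) := by
      rw [← Real.rpow_natCast ((π / b) ^ ((1:ℝ)/2)) k, ← Real.rpow_mul hpb.le,
        ← Real.rpow_add hpb]
      push_cast
      ring_nf
    have hre : (((k:ℕ)+1:ℕ) : ℝ) * ((π / b) ^ ((1:ℝ)/2) / (2*b) * ((π / b) ^ ((1:ℝ)/2)) ^ k)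
        = (((k:ℕ)+1:ℕ) : ℝ)/(2*b) * ((π / b) ^ ((1:ℝ)/2) * ((π / b) ^ ((1:ℝ)/2)) ^ k) := by
      ring
    rw [hre, key]

/-- The covariance matrix kernel `K(s,t)` of the limiting Gaussian process. -/
noncomputable def covKernel {d : ℕ} (s t : EuclideanSpace ℝ (Fin d)) :
    Matrix (Fin d) (Fin d) ℝ :=
  Real.exp ((‖s‖ ^ 2 + ‖t‖ ^ 2) / 2) •
    (Real.exp ⟪s, t⟫ • (Matrix.vecMulVec t s + 1) - Matrix.vecMulVec t s -
      (1 + ⟪s, t⟫) • (1 : Matrix (Fin d) (Fin d) ℝ))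

lemma aux_trace_covKernel {d : ℕ} (t : EuclideanSpace ℝ (Fin d)) :
    Matrix.trace (covKernel t t)
      = Real.exp (‖t‖ ^ 2) *
        (Real.exp (‖t‖ ^ 2) * (‖t‖ ^ 2 + d) - ‖t‖ ^ 2 - (1 + ‖t‖ ^ 2) * d) := by
  have h1 : ⟪t, t⟫ = ‖t‖ ^ 2 := real_inner_self_eq_norm_sq t
  have h2 : Matrix.trace (Matrix.vecMulVec (t : Fin d → ℝ) t) = ‖t‖ ^ 2 := by
    rw [← h1, PiLp.inner_apply]
    simp [Matrix.trace, Matrix.diag, Matrix.vecMulVec_apply, sq]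
  simp only [covKernel, h1, Matrix.trace_smul, Matrix.trace_sub, Matrix.trace_add,
    Matrix.trace_one, h2, smul_eq_mul, Fintype.card_fin]
  rw [show (‖t‖ ^ 2 + ‖t‖ ^ 2) / 2 = ‖t‖ ^ 2 by ring]

theorem stmt_13 (d : ℕ) (hd : 1 ≤ d) (γ : ℝ) (hγ : 2 < γ) :
    ∫ t : EuclideanSpace ℝ (Fin d),
        Matrix.trace (covKernel t t) * Real.exp (-γ * ‖t‖ ^ 2) =
      (Real.pi / (γ - 2)) ^ ((d : ℝ) / 2) * ((d : ℝ) + d / (2 * (γ - 2))) -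
        ((d : ℝ) * (d + 1) / (2 * (γ - 1)) + d) * (Real.pi / (γ - 1)) ^ ((d : ℝ) / 2) := by
  have h2 : (0 : ℝ) < γ - 2 := by linarith
  have h1 : (0 : ℝ) < γ - 1 := by linarith
  have hpt : ∀ t : EuclideanSpace ℝ (Fin d),
      Matrix.trace (covKernel t t) * Real.exp (-γ * ‖t‖ ^ 2)
      = (‖t‖ ^ 2 * Real.exp (-(γ - 2) * ‖t‖ ^ 2) + d * Real.exp (-(γ - 2) * ‖t‖ ^ 2))
        - ((d + 1) * (‖t‖ ^ 2 * Real.exp (-(γ - 1) * ‖t‖ ^ 2))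
            + d * Real.exp (-(γ - 1) * ‖t‖ ^ 2)) := by
    intro t
    rw [aux_trace_covKernel]
    have e2 : Real.exp (-(γ - 2) * ‖t‖ ^ 2)
        = Real.exp (‖t‖ ^ 2) * Real.exp (‖t‖ ^ 2) * Real.exp (-γ * ‖t‖ ^ 2) := by
      rw [← Real.exp_add, ← Real.exp_add]; ring_nf
    have e1 : Real.exp (-(γ - 1) * ‖t‖ ^ 2)
        = Real.exp (‖t‖ ^ 2) * Real.exp (-γ * ‖t‖ ^ 2) := by
      rw [← Real.exp_add]; ring_nf
    rw [e2, e1]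
    ring
  simp only [hpt]
  have hA : Integrable (fun t : EuclideanSpace ℝ (Fin d) =>
      ‖t‖ ^ 2 * Real.exp (-(γ - 2) * ‖t‖ ^ 2) + (d : ℝ) * Real.exp (-(γ - 2) * ‖t‖ ^ 2)) :=
    (aux_integrable_normsq_exp_E h2).add ((aux_integrable_exp_E h2).const_mul _)
  have hB : Integrable (fun t : EuclideanSpace ℝ (Fin d) =>
      ((d : ℝ) + 1) * (‖t‖ ^ 2 * Real.exp (-(γ - 1) * ‖t‖ ^ 2))
        + (d : ℝ) * Real.exp (-(γ - 1) * ‖t‖ ^ 2)) :=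
    ((aux_integrable_normsq_exp_E h1).const_mul _).add ((aux_integrable_exp_E h1).const_mul _)
  rw [integral_sub hA hB,
    integral_add (aux_integrable_normsq_exp_E h2) ((aux_integrable_exp_E h2).const_mul _),
    integral_add ((aux_integrable_normsq_exp_E h1).const_mul _)
      ((aux_integrable_exp_E h1).const_mul _),
    MeasureTheory.integral_const_mul, MeasureTheory.integral_const_mul,
    MeasureTheory.integral_const_mul,
    aux_integral_normsq_exp_E h2, aux_integral_normsq_exp_E h1,
    GaussianFourier.integral_rexp_neg_mul_sq_norm h2, GaussianFourier.integral_rexp_neg_mul_sq_norm h1]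
  simp only [finrank_euclideanSpace_fin]
  ring
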